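/- arXiv:1508.01810 — 3 statements merged into one kernel-verified Lean document; each statement's English description precedes it below -/
import Mathlib

section
/- Let $n \ge 3$ and $m = n-1$. Let $G$ be a symmetric positive definite $m \times m$ real matrix, let $N$ be a real number, and let $s_1, \dots, s_m$ be real numbers. Define the $n \times n$ matrix $A^{(\rho)}$ as the block-diagonal matrix with top-left $m \times m$ block $\frac{n-1}{n-2} G$ and bottom-right entry $1$, and for each $a \in \{1,\dots,m\}$ define the $n \times n$ matrix $A^{(a)}$ in block form with top-left $m \times m$ block $-\frac{n-1}{n-2} s_a G$, top-right $m \times 1$ block $-N$ times the $a$-th column of $G$, bottom-left $1 \times m$ block $-N$ times the $a$-th row of $G$, and bottom-right entry $-s_a$. Then $A^{(\rho)}$ is symmetric and positive definite, and each $A^{(a)}$ is symmetric; hence the first-order system $A^{(\rho)} \partial_\rho \mathbf{u} + A^{(K)} \partial_K \mathbf{u} + \mathcal{B} = 0$ with these coefficient matrices is a first-order symmetric hyperbolic system. -/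
open Matrix


/-- The coefficient matrices of the first-order system (3.3) obtained
from the momentum constraint in coordinates adapted to the foliation: the coefficient
`A^(ρ)` of the `ρ`-derivative is symmetric positive definite and each spatial coefficient
`A^(a)` is symmetric, i.e. the system is first order symmetric hyperbolic.
Here `G` is the (symmetric positive definite) inverse induced metric `γ̂^{AB}`,
`N` is the lapse, and `s a` are the shift components. -/
theorem momentum_constraint_symmetric_hyperbolic
    (n : ℕ) (hn : 3 ≤ n)
    (G : Matrix (Fin (n - 1)) (Fin (n - 1)) ℝ) (hG : G.PosDef)
    (N : ℝ) (s : Fin (n - 1) → ℝ)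
    (Aρ : Matrix (Fin (n - 1) ⊕ Unit) (Fin (n - 1) ⊕ Unit) ℝ)
    (hAρ : Aρ = Matrix.fromBlocks
      (Matrix.of fun i j => ((n : ℝ) - 1) / ((n : ℝ) - 2) * G i j)
      0 0 1)
    (A : Fin (n - 1) → Matrix (Fin (n - 1) ⊕ Unit) (Fin (n - 1) ⊕ Unit) ℝ)
    (hA : ∀ a, A a = Matrix.fromBlocks
      (Matrix.of fun i j => -(((n : ℝ) - 1) / ((n : ℝ) - 2)) * s a * G i j)
      (Matrix.of fun i _ => -N * G i a)
      (Matrix.of fun _ j => -N * G a j)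
      (Matrix.of fun _ _ => -s a)) :
    Aρ.IsSymm ∧ Aρ.PosDef ∧ ∀ a, (A a).IsSymm := by
  have hGs : ∀ i j, G j i = G i j := fun i j => hG.1.apply i j
  have hn2 : (2:ℝ) < (n:ℝ) := by exact_mod_cast (by omega : 2 < n)
  have hc : 0 < ((n:ℝ) - 1) / ((n:ℝ) - 2) := div_pos (by linarith) (by linarith)
  have hsym : Aρ.IsSymm := by
    subst hAρ
    unfold Matrix.IsSymm
    ext (i | i) (j | j) <;>
      simp [Matrix.fromBlocks, Matrix.transpose_apply, hGs, Matrix.one_apply, eq_comm]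
  refine ⟨hsym, ?_, ?_⟩
  · refine Matrix.posDef_iff_dotProduct_mulVec.mpr ⟨?_, ?_⟩
    · rw [Matrix.IsHermitian, Matrix.conjTranspose_eq_transpose_of_trivial]; exact hsym
    · intro x hx
      have key : star x ⬝ᵥ Aρ *ᵥ x =
          ((n:ℝ) - 1) / ((n:ℝ) - 2) * (star (x ∘ Sum.inl) ⬝ᵥ G *ᵥ (x ∘ Sum.inl))
          + x (Sum.inr ()) * x (Sum.inr ()) := by
        subst hAρ
        simp only [dotProduct, mulVec, Fintype.sum_sum_type, Matrix.fromBlocks,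
          Matrix.of_apply, Sum.elim_inl, Sum.elim_inr, Matrix.zero_apply,
          Matrix.one_apply, Pi.star_apply, star_trivial, Function.comp_apply,
          Finset.mul_sum]
        simp only [Finset.univ_unique, Finset.sum_const, Finset.card_singleton,
          one_smul, zero_mul, Finset.sum_singleton, if_true, one_mul, add_zero,
          zero_add, smul_eq_mul, mul_zero, smul_zero]
        congr 1
        · apply Finset.sum_congr rfl; intro i _
          rw [Finset.mul_sum]
          apply Finset.sum_congr rfl; intro j _
          ring
      rw [key]
      rcases eq_or_ne (x ∘ Sum.inl) 0 with h0 | h0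
      · have hx2 : x (Sum.inr ()) ≠ 0 := by
          intro h
          apply hx
          funext i
          rcases i with i | ⟨⟩
          · exact congrFun h0 i
          · exact h
        have := hG.posSemidef.dotProduct_mulVec_nonneg (x ∘ Sum.inl)
        nlinarith [mul_self_pos.mpr hx2]
      · have := hG.dotProduct_mulVec_pos h0
        nlinarith [sq_nonneg (x (Sum.inr ()))]
  · intro a
    rw [hA a]
    unfold Matrix.IsSymm
    ext (i | i) (j | j) <;>
      simp [Matrix.fromBlocks, Matrix.transpose_apply, hGs]
end

section
/- Fix integers $n \ge 3$ and $m = n - 1$. Let $G$ be a symmetric positive definite $m \times m$ real matrix, let $k \in \mathbb{R}^m$ and set $v = G k$, and let $\kappa, \tau$ be nonzero real numbers. Define the $n \times n$ matrix $H$ in block form (first $m$ rows/columns indexed by $\{1,\dots,m\}$, last row/column indexed by $n$) by: top-left $m \times m$ block $(4\, v v^T - \kappa\tau\, G)/\kappa^2$, top-right $m \times 1$ block $-(2/\kappa)\, v$, bottom-left $1 \times m$ block $-(2/\kappa)\, v^T$, and bottom-right entry $1$. Then $H$ is symmetric, and $H$ is positive definite if and only if $\kappa\,\tau < 0$. -/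
open Matrix Finset

lemma quad_eval (m : ℕ) (G : Matrix (Fin m) (Fin m) ℝ) (v : Fin m → ℝ) (κ τ : ℝ) (hκ : κ ≠ 0)
    (x : Fin m ⊕ Unit → ℝ) :
    dotProduct x ((Matrix.fromBlocks
      (Matrix.of fun i j => (4 * v i * v j - κ * τ * G i j) / κ ^ 2)
      (Matrix.of fun i _ => -(2 / κ) * v i)
      (Matrix.of fun _ j => -(2 / κ) * v j)
      (Matrix.of fun _ _ => (1:ℝ))) *ᵥ x)
    = (x (Sum.inr ()) - 2 * (dotProduct v (x ∘ Sum.inl)) / κ)^2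
      - (τ/κ) * (dotProduct (x ∘ Sum.inl) (G *ᵥ (x ∘ Sum.inl))) := by
  set y : Fin m → ℝ := x ∘ Sum.inl with hy
  set s : ℝ := x (Sum.inr ()) with hs
  have hA : ∀ i, (∑ j, ((4 * v i * v j - κ * τ * G i j) / κ ^ 2) * y j)
      = (4 * v i / κ ^ 2) * (∑ j, v j * y j) - (κ * τ / κ ^ 2) * (∑ j, G i j * y j) := by
    intro i
    rw [Finset.mul_sum, Finset.mul_sum, ← Finset.sum_sub_distrib]
    exact Finset.sum_congr rfl fun j _ => by ring
  simp only [dotProduct, Matrix.mulVec, Fintype.sum_sum_type, Finset.univ_unique,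
    Finset.sum_singleton, Matrix.fromBlocks_apply₁₁, Matrix.fromBlocks_apply₁₂,
    Matrix.fromBlocks_apply₂₁, Matrix.fromBlocks_apply₂₂, Matrix.of_apply, dotProduct]
  show (∑ i, y i * ((∑ j, ((4*v i*v j - κ*τ*G i j)/κ^2) * y j) + (-(2/κ)*v i*s)))
      + s * ((∑ i, -(2/κ)*v i * y i) + 1*s)
    = (s - 2 * (∑ i, v i * y i) / κ)^2 - (τ/κ) * (∑ i, y i * ∑ j, G i j * y j)
  set A := ∑ i, v i * y i with hA'
  set B := ∑ i, y i * ∑ j, G i j * y j with hB'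
  have h1 : (∑ i, y i * ((∑ j, ((4*v i*v j - κ*τ*G i j)/κ^2) * y j) + (-(2/κ)*v i*s)))
      = (4/κ^2) * A * A - (κ*τ/κ^2) * B - (2/κ) * A * s := by
    simp_rw [hA]
    have h : ∀ i ∈ Finset.univ, y i * ((4 * v i / κ ^ 2 * A - κ * τ / κ ^ 2 * ∑ j, G i j * y j) + (-(2/κ)*v i*s))
        = (4/κ^2) * A * (v i * y i) - (κ*τ/κ^2) * (y i * ∑ j, G i j * y j) - ((2/κ) * s * (v i * y i)) := fun i _ => by ring
    rw [Finset.sum_congr rfl h, Finset.sum_sub_distrib, Finset.sum_sub_distrib,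
      ← Finset.mul_sum, ← Finset.mul_sum, ← Finset.mul_sum, ← hA', ← hB']
    ring
  have h2 : (∑ i, -(2/κ)*v i * y i) = -(2/κ) * A := by
    rw [hA', Finset.mul_sum]; exact Finset.sum_congr rfl fun i _ => by ring
  rw [h1, h2]
  field_simp
  ring

/-- The candidate symmetrizer `H` of equation (4.12), written in block
form with `G = γ̂^{AB}` positive definite, `v = G k`, `κ = 𝛋` and `τ = 𝐊^E{}_E`
nonzero: `H` is symmetric, and it is positive definite if and only if `κ τ < 0`. -/
theorem symmetrizer_positive_definite_iff
    (n : ℕ) (hn : 3 ≤ n)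
    (G : Matrix (Fin (n - 1)) (Fin (n - 1)) ℝ) (hG : G.PosDef)
    (k : Fin (n - 1) → ℝ) (v : Fin (n - 1) → ℝ) (hv : v = G.mulVec k)
    (κ τ : ℝ) (hκ : κ ≠ 0) (hτ : τ ≠ 0)
    (H : Matrix (Fin (n - 1) ⊕ Unit) (Fin (n - 1) ⊕ Unit) ℝ)
    (hH : H = Matrix.fromBlocks
      (Matrix.of fun i j => (4 * v i * v j - κ * τ * G i j) / κ ^ 2)
      (Matrix.of fun i _ => -(2 / κ) * v i)
      (Matrix.of fun _ j => -(2 / κ) * v j)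
      (Matrix.of fun _ _ => 1)) :
    H.IsSymm ∧ (H.PosDef ↔ κ * τ < 0) := by
  have hGsymm : ∀ i j, G j i = G i j := fun i j => by
    have := congrFun (congrFun hG.1 i) j
    simpa [Matrix.conjTranspose_apply] using this
  have hsymm : H.IsSymm := by
    rw [hH]
    ext p q
    rcases p with i | u <;> rcases q with j | u' <;>
      simp only [Matrix.transpose_apply, Matrix.fromBlocks_apply₁₁,
        Matrix.fromBlocks_apply₁₂, Matrix.fromBlocks_apply₂₁,
        Matrix.fromBlocks_apply₂₂, Matrix.of_apply]
    rw [hGsymm i j]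
    ring
  refine ⟨hsymm, ?_, ?_⟩
  · intro hPD
    -- choose y = const 1
    haveI : NeZero (n - 1) := ⟨by omega⟩
    set y : Fin (n - 1) → ℝ := fun _ => 1 with hy
    set x : Fin (n - 1) ⊕ Unit → ℝ :=
      Sum.elim y (fun _ => 2 * (dotProduct v y) / κ) with hx
    have hxne : x ≠ 0 := by
      intro h
      have := congrFun h (Sum.inl ⟨0, by omega⟩)
      simp [hx, hy] at this
    have hq := hPD.dotProduct_mulVec_pos hxne
    rw [show star x = x from star_trivial x, hH, quad_eval _ G v κ τ hκ] at hq
    have hxl : x ∘ Sum.inl = y := rfl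
    have hxr : x (Sum.inr ()) = 2 * (dotProduct v y) / κ := rfl
    rw [hxl, hxr] at hq
    simp only [sub_self, ne_eq, OfNat.ofNat_ne_zero, not_false_eq_true, zero_pow, zero_sub] at hq
    have hyne : y ≠ 0 := by
      intro h
      have := congrFun h ⟨0, by omega⟩
      simp [hy] at this
    have hb : 0 < dotProduct y (G *ᵥ y) := by
      simpa [star_trivial] using hG.dotProduct_mulVec_pos hyne
    have hτκ : τ / κ < 0 := by
      by_contra h
      push_neg at h
      nlinarith
    have : κ * τ = (τ / κ) * κ ^ 2 := by field_simp
    rw [this]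
    exact mul_neg_of_neg_of_pos hτκ (by positivity)
  · intro hκτ
    have hτκ : τ / κ < 0 := by
      have : τ / κ = κ * τ / κ ^ 2 := by field_simp
      rw [this]
      exact div_neg_of_neg_of_pos hκτ (by positivity)
    refine Matrix.PosDef.of_dotProduct_mulVec_pos ?_ ?_
    · ext p q
      rw [Matrix.conjTranspose_apply, star_trivial]
      exact hsymm.apply p q
    · intro x hx
      rw [show star x = x from star_trivial x, hH, quad_eval _ G v κ τ hκ]
      by_cases hyz : x ∘ Sum.inl = 0
      · have hs : x (Sum.inr ()) ≠ 0 := by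
          intro h
          apply hx
          funext p
          rcases p with i | u
          · exact congrFun hyz i
          · cases u; exact h
        rw [hyz]
        simp only [dotProduct_zero, zero_dotProduct, Matrix.mulVec_zero,
          dotProduct_zero, zero_dotProduct, mul_zero, zero_div, sub_zero]
        positivity
      · have hb : 0 < dotProduct (x ∘ Sum.inl) (G *ᵥ (x ∘ Sum.inl)) := by
          simpa [star_trivial] using hG.dotProduct_mulVec_pos hyz
        have h1 : 0 ≤ (x (Sum.inr ()) - 2 * (dotProduct v (x ∘ Sum.inl)) / κ)^2 := sq_nonneg _
        nlinarith
end

section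
/- Fix integers $n \ge 3$ and $m = n - 1$. Let $G$ be a symmetric positive definite $m \times m$ real matrix, let $k \in \mathbb{R}^m$ and set $v = G k$, let $\kappa, \tau$ be nonzero real numbers, let $N$ be a real number, and let $s_1, \dots, s_m$ be real numbers. For each $a \in \{1,\dots,m\}$ define the $n \times n$ matrix $B^{(a)} = -s_a I_n + E^{(a)}$, where $E^{(a)}$ has: row $a$ equal to $-2(N/\tau)\,v^T$ in the first $m$ columns and $\kappa N/\tau$ in column $n$; row $n$ equal to $-N$ times the $a$-th row of $G$ in the first $m$ columns and $0$ in column $n$; and all other rows zero. Define the $n \times n$ matrix $H$ in block form by: top-left $m \times m$ block $(4\, v v^T - \kappa\tau\, G)/\kappa^2$, top-right $m \times 1$ block $-(2/\kappa)\, v$, bottom-left $1 \times m$ block $-(2/\kappa)\, v^T$, and bottom-right entry $1$. Then for every $a \in \{1,\dots,m\}$ the product matrix $H\,B^{(a)}$ is symmetric. -/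
/-- The direct-calculation part of Lemma 4.1: the matrix `H` of
equation (4.12) simultaneously symmetrizes all the spatial coefficient matrices
`B^(a)` (equation (4.10)) of the reduced momentum constraint, i.e. every product
`H B^(a)` is symmetric. Here `G = γ̂^{AB}` is positive definite, `v = G k`,
`κ = 𝛋`, `τ = 𝐊^E{}_E`, `N` is the lapse and `s a` the shift components. -/
theorem symmetrizer_symmetrizes_coefficients
    (n : ℕ) (hn : 3 ≤ n)
    (G : Matrix (Fin (n - 1)) (Fin (n - 1)) ℝ) (hG : G.PosDef)
    (k : Fin (n - 1) → ℝ) (v : Fin (n - 1) → ℝ) (hv : v = G.mulVec k)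
    (κ τ : ℝ) (hκ : κ ≠ 0) (hτ : τ ≠ 0)
    (N : ℝ) (s : Fin (n - 1) → ℝ)
    (B : Fin (n - 1) → Matrix (Fin (n - 1) ⊕ Unit) (Fin (n - 1) ⊕ Unit) ℝ)
    (hB : ∀ a, B a = (-(s a)) • (1 : Matrix (Fin (n - 1) ⊕ Unit) (Fin (n - 1) ⊕ Unit) ℝ)
      + Matrix.of (fun i j =>
          match i, j with
          | Sum.inl i, Sum.inl j => if i = a then -2 * (N / τ) * v j else 0
          | Sum.inl i, Sum.inr _ => if i = a then κ * N / τ else 0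
          | Sum.inr _, Sum.inl j => -N * G a j
          | Sum.inr _, Sum.inr _ => 0))
    (H : Matrix (Fin (n - 1) ⊕ Unit) (Fin (n - 1) ⊕ Unit) ℝ)
    (hH : H = Matrix.fromBlocks
      (Matrix.of fun i j => (4 * v i * v j - κ * τ * G i j) / κ ^ 2)
      (Matrix.of fun i _ => -(2 / κ) * v i)
      (Matrix.of fun _ j => -(2 / κ) * v j)
      (Matrix.of fun _ _ => 1)) :
    ∀ a, (H * B a).IsSymm := by
  intro a
  have hGs : ∀ i j, G i j = G j i := by
    intro i j
    have h := hG.1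
    rw [Matrix.IsHermitian] at h
    conv_lhs => rw [← h]
    simp [Matrix.conjTranspose_apply]
  have hHsymm : ∀ p q, H p q = H q p := by
    intro p q
    cases p <;> cases q <;> simp [hH, hGs _ _] <;> ring
  rw [Matrix.IsSymm]
  ext i j
  rw [Matrix.transpose_apply, hB a, Matrix.mul_add, Matrix.mul_smul, Matrix.mul_one,
    Matrix.add_apply, Matrix.add_apply, Matrix.smul_apply, Matrix.smul_apply,
    hHsymm j i]
  congr 1
  simp only [Matrix.mul_apply, Fintype.sum_sum_type, Matrix.of_apply, hH,
    Finset.univ_unique, Finset.sum_singleton]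
  cases i <;> cases j <;>
    dsimp only [Matrix.fromBlocks_apply₁₁, Matrix.fromBlocks_apply₁₂,
      Matrix.fromBlocks_apply₂₁, Matrix.fromBlocks_apply₂₂, Matrix.of_apply] <;>
    simp only [mul_ite, mul_zero, Finset.sum_ite_eq', Finset.mem_univ, if_true]
  case e_a.inl.inl i j =>
    field_simp
    try rw [hGs j a]
    try rw [hGs i a]
    try rw [hGs j i]
    ring
  case e_a.inl.inr i j =>
    field_simp
    try rw [hGs i a]
    ring
  case e_a.inr.inl i j =>
    field_simp
    try rw [hGs j a]
    ring
end
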